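/- Let ψ be a bipartite state on S ⊗ T with maximally mixed marginals and maximal correlation ρ < 1. Suppose standard orthonormal bases {S_i}, {T_j} satisfy Tr((S_i ⊗ T_j)ψ) = c_i δ_{ij} with c_0 = 1 and 0 ≤ c_i ≤ ρ for i ≥ 1. Then for Hermitian M, N on n copies with Fourier coefficients M̂(s), N̂(t) in the product bases, |Tr((M ⊗ N)ψ^{⊗n}) − Tr((M^{≤d} ⊗ N^{≤d})ψ^{⊗n})| ≤ ρ^d ⦀M⦀₂ ⦀N⦀₂, where M^{≤d} keeps only Fourier terms with at most d nonzero coordinates. -/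

import Mathlib

open Matrix ComplexOrder

/-- Tensor (Kronecker) product of operators. -/
noncomputable def tensorOp {α β : Type*} (P : Matrix α α ℂ) (Q : Matrix β β ℂ) :
    Matrix (α × β) (α × β) ℂ :=
  fun x y => P x.1 y.1 * Q x.2 y.2

/-- Partial trace over the second factor. -/
noncomputable def ptraceT {α β : Type*} [Fintype β]
    (ψ : Matrix (α × β) (α × β) ℂ) : Matrix α α ℂ :=
  fun i j => ∑ k : β, ψ (i, k) (j, k)

/-- Partial trace over the first factor. -/
noncomputable def ptraceS {α β : Type*} [Fintype α]
    (ψ : Matrix (α × β) (α × β) ℂ) : Matrix β β ℂ :=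
  fun i j => ∑ k : α, ψ (k, i) (k, j)

/-- The `n`-fold tensor power `ψ^{⊗n}` of a bipartite operator on `S ⊗ T`, regarded as a
bipartite operator on `S^{⊗n} ⊗ T^{⊗n}`. -/
noncomputable def tensorPow {s t n : ℕ} (ψ : Matrix (Fin s × Fin t) (Fin s × Fin t) ℂ) :
    Matrix ((Fin n → Fin s) × (Fin n → Fin t)) ((Fin n → Fin s) × (Fin n → Fin t)) ℂ :=
  fun x y => ∏ i, ψ (x.1 i, x.2 i) (y.1 i, y.2 i)

/-- The tensor-product operator `B_σ = ⊗ᵢ B_{σᵢ}`. -/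
noncomputable def basisProd {m k n : ℕ} (B : Fin k → Matrix (Fin m) (Fin m) ℂ)
    (σ : Fin n → Fin k) : Matrix (Fin n → Fin m) (Fin n → Fin m) ℂ :=
  fun x y => ∏ i, B (σ i) (x i) (y i)

/-- Number of nonzero coordinates of `σ`. -/
def suppCard {k n : ℕ} [NeZero k] (σ : Fin n → Fin k) : ℕ :=
  (Finset.univ.filter (fun i => σ i ≠ 0)).card

/-- Squared normalized 2-norm `⦀A⦀₂² = (1/m^n)·Tr(A†A)`. -/
noncomputable def nnormSq {m n : ℕ} (A : Matrix (Fin n → Fin m) (Fin n → Fin m) ℂ) : ℝ :=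
  (1 / (m : ℝ) ^ n) * (Matrix.trace (Aᴴ * A)).re

/-- Low-degree truncation `M^{≤d} = ∑_{|σ| ≤ d} M̂(σ) B_σ`. -/
noncomputable def lowDegreePart {m k n : ℕ} [NeZero k]
    (B : Fin k → Matrix (Fin m) (Fin m) ℂ) (Mhat : (Fin n → Fin k) → ℝ) (d : ℕ) :
    Matrix (Fin n → Fin m) (Fin n → Fin m) ℂ :=
  ∑ σ ∈ Finset.univ.filter (fun σ : Fin n → Fin k => suppCard σ ≤ d),
    Mhat σ • basisProd B σ

noncomputable def kron {n : ℕ} {κ : Type*} (P : Fin n → Matrix κ κ ℂ) :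
    Matrix (Fin n → κ) (Fin n → κ) ℂ :=
  Matrix.of fun x y => ∏ i, P i (x i) (y i)

lemma trace_mul_expand {α : Type*} [Fintype α] (A B : Matrix α α ℂ) :
    Matrix.trace (A * B) = ∑ x : α, ∑ y : α, A x y * B y x := by
  simp [Matrix.trace, Matrix.mul_apply, Matrix.diag]

lemma trace_kron_mul {n : ℕ} {κ : Type*} [Fintype κ] [DecidableEq κ]
    (P Q : Fin n → Matrix κ κ ℂ) :
    Matrix.trace (kron P * kron Q) = ∏ i, Matrix.trace (P i * Q i) := by
  rw [trace_mul_expand]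
  have h1 : ∀ x y : Fin n → κ, kron P x y * kron Q y x
      = ∏ i, (P i (x i) (y i) * Q i (y i) (x i)) := by
    intro x y; simp [kron, Finset.prod_mul_distrib]
  simp_rw [h1]
  rw [← Fintype.sum_prod_type']
  rw [← Equiv.sum_comp (Equiv.arrowProdEquivProdArrow (Fin n) (fun _ => κ) (fun _ => κ))]
  simp only [Equiv.arrowProdEquivProdArrow, Equiv.coe_fn_mk]
  rw [← Fintype.prod_sum (fun (i : Fin n) (q : κ × κ) => P i q.1 q.2 * Q i q.2 q.1)]
  refine Finset.prod_congr rfl fun i _ => ?_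
  rw [trace_mul_expand, ← Fintype.sum_prod_type']

lemma basisProd_eq_kron {m k n : ℕ} (B : Fin k → Matrix (Fin m) (Fin m) ℂ)
    (σ : Fin n → Fin k) : basisProd B σ = kron (fun i => B (σ i)) := rfl

lemma trace_submatrix_equiv' {α β : Type*} [Fintype α] [Fintype β] (e : α ≃ β)
    (A : Matrix β β ℂ) : Matrix.trace (A.submatrix e e) = Matrix.trace A := by
  simpa [Matrix.trace, Matrix.diag] using Equiv.sum_comp e (fun j => A j j)

lemma tensor_trace_factor {s t n : ℕ}
    (ψ : Matrix (Fin s × Fin t) (Fin s × Fin t) ℂ)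
    (P : Fin n → Matrix (Fin s) (Fin s) ℂ) (Q : Fin n → Matrix (Fin t) (Fin t) ℂ) :
    Matrix.trace (tensorOp (kron P) (kron Q) * tensorPow ψ)
      = ∏ i, Matrix.trace (tensorOp (P i) (Q i) * ψ) := by
  classical
  set e : ((Fin n → Fin s) × (Fin n → Fin t)) ≃ (Fin n → Fin s × Fin t) :=
    (Equiv.arrowProdEquivProdArrow (Fin n) (fun _ => Fin s) (fun _ => Fin t)).symm with he
  have h1 : tensorOp (kron P) (kron Q)
      = (kron (fun i => tensorOp (P i) (Q i))).submatrix e e := by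
    ext x y
    simp [tensorOp, kron, e, Equiv.arrowProdEquivProdArrow, Finset.prod_mul_distrib]
  have h2 : tensorPow ψ = (kron (fun _ : Fin n => ψ)).submatrix e e := by
    ext x y
    simp [tensorPow, kron, e, Equiv.arrowProdEquivProdArrow]
  rw [h1, h2, Matrix.submatrix_mul_equiv, trace_submatrix_equiv' e, trace_kron_mul]

lemma trace_tensor_expand {s t n : ℕ} {ι ι' : Type*} [Fintype ι] [Fintype ι']
    (ψ : Matrix (Fin s × Fin t) (Fin s × Fin t) ℂ)
    (f : ι → ℝ) (g : ι' → ℝ)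
    (A : ι → Matrix (Fin n → Fin s) (Fin n → Fin s) ℂ)
    (C : ι' → Matrix (Fin n → Fin t) (Fin n → Fin t) ℂ) :
    Matrix.trace (tensorOp (∑ σ, f σ • A σ) (∑ τ, g τ • C τ) * tensorPow ψ)
      = ∑ σ, ∑ τ, (f σ : ℂ) * (g τ : ℂ) *
          Matrix.trace (tensorOp (A σ) (C τ) * tensorPow ψ) := by
  have h : tensorOp (∑ σ, f σ • A σ) (∑ τ, g τ • C τ)
      = ∑ σ, ∑ τ, ((f σ : ℂ) * (g τ : ℂ)) • tensorOp (A σ) (C τ) := by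
    ext x y
    show ((∑ σ, f σ • A σ) x.1 y.1) * ((∑ τ, g τ • C τ) x.2 y.2) = _
    simp only [Matrix.sum_apply, Matrix.smul_apply, Finset.sum_mul_sum]
    refine Finset.sum_congr rfl fun σ _ => Finset.sum_congr rfl fun τ _ => ?_
    show f σ • A σ x.1 y.1 * g τ • C τ x.2 y.2
      = ((f σ : ℂ) * (g τ : ℂ)) • (A σ x.1 y.1 * C τ x.2 y.2)
    simp only [Complex.real_smul, smul_eq_mul]
    ring
  rw [h]
  simp [Matrix.sum_mul, Matrix.trace_sum, Matrix.smul_mul, Matrix.trace_smul, smul_eq_mul,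
    mul_assoc]

lemma basisProd_conjTranspose {m k n : ℕ} (B : Fin k → Matrix (Fin m) (Fin m) ℂ)
    (hH : ∀ i, (B i).IsHermitian) (σ : Fin n → Fin k) :
    (basisProd B σ)ᴴ = basisProd B σ := by
  ext x y
  have h : ∀ i, star (B (σ i) (y i) (x i)) = B (σ i) (x i) (y i) := by
    intro i
    have := congrFun (congrFun (hH (σ i)) (x i)) (y i)
    simpa [Matrix.conjTranspose_apply] using this
  simp [Matrix.conjTranspose_apply, basisProd, star_prod, h]

lemma nnormSq_eq_sum_sq {m k n : ℕ} (hm : 0 < m) (B : Fin k → Matrix (Fin m) (Fin m) ℂ)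
    (hH : ∀ i, (B i).IsHermitian)
    (hO : ∀ i i', Matrix.trace (B i * B i') = if i = i' then (m : ℂ) else 0)
    (f : (Fin n → Fin k) → ℝ) :
    nnormSq (∑ σ, f σ • basisProd B σ) = ∑ σ, (f σ) ^ 2 := by
  classical
  have hmR : ((m : ℝ) : ℝ) ≠ 0 := by positivity
  have hMH : (∑ σ : Fin n → Fin k, f σ • basisProd B σ)ᴴ
      = ∑ σ : Fin n → Fin k, f σ • basisProd B σ := by
    rw [Matrix.conjTranspose_sum]
    exact Finset.sum_congr rfl fun σ _ => by
      rw [Matrix.conjTranspose_smul, star_trivial, basisProd_conjTranspose B hH]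
  have key : ∀ σ τ : Fin n → Fin k, Matrix.trace (basisProd B σ * basisProd B τ)
      = if σ = τ then ((m : ℂ)) ^ n else 0 := by
    intro σ τ
    rw [basisProd_eq_kron, basisProd_eq_kron, trace_kron_mul]
    simp_rw [hO]
    rw [Finset.prod_ite_zero]
    simp [funext_iff]
  have htr : Matrix.trace ((∑ σ : Fin n → Fin k, f σ • basisProd B σ) *
      (∑ τ : Fin n → Fin k, f τ • basisProd B τ))
      = (((m : ℝ) ^ n * ∑ σ : Fin n → Fin k, (f σ) ^ 2 : ℝ) : ℂ) := by
    rw [Finset.sum_mul_sum]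
    rw [Matrix.trace_sum]
    have : ∀ σ : Fin n → Fin k,
        Matrix.trace (∑ τ : Fin n → Fin k, (f σ • basisProd B σ) * (f τ • basisProd B τ))
        = ((f σ) ^ 2 : ℝ) * ((m : ℝ) ^ n : ℝ) := by
      intro σ
      rw [Matrix.trace_sum]
      have h2 : ∀ τ : Fin n → Fin k,
          Matrix.trace ((f σ • basisProd B σ) * (f τ • basisProd B τ))
          = ((f σ : ℂ)) * ((f τ : ℂ)) * (if σ = τ then ((m : ℂ)) ^ n else 0) := by
        intro τ
        rw [Matrix.smul_mul, Matrix.mul_smul, Matrix.trace_smul, Matrix.trace_smul, key]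
        simp [Complex.real_smul]; ring
      simp_rw [h2]
      simp only [mul_ite, mul_zero, Finset.sum_ite_eq, Finset.mem_univ, if_true]
      push_cast
      ring
    simp_rw [this]
    push_cast
    rw [← Finset.sum_mul]
    ring
  rw [nnormSq, hMH, htr]
  rw [Complex.ofReal_re]
  field_simp


lemma fin_val_eq_zero_iff {k : ℕ} [NeZero k] (a : Fin k) : (a : ℕ) = 0 ↔ a = 0 := by
  constructor
  · intro h; exact Fin.val_injective (by simpa using h)
  · intro h; simp [h]


/-- Degree truncation lemma: for a noisy MES `ψ` whose correlation coefficients in aligned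
standard orthonormal bases satisfy `c_0 = 1` and `0 ≤ c_i ≤ ρ` for `i ≥ 1`, and for
Hermitian `M`, `N` on `n` copies with Fourier coefficients `M̂`, `N̂`,
`|Tr((M ⊗ N)ψ^{⊗n}) − Tr((M^{≤d} ⊗ N^{≤d})ψ^{⊗n})| ≤ ρ^d ⦀M⦀₂ ⦀N⦀₂`. -/
theorem degree_truncation_error_bound {s t n : ℕ} [NeZero s] [NeZero t]
    (ψ : Matrix (Fin s × Fin t) (Fin s × Fin t) ℂ)
    (hψ : ψ.PosSemidef) (htr : Matrix.trace ψ = 1)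
    (hmargS : ptraceT ψ = ((s : ℂ)⁻¹) • (1 : Matrix (Fin s) (Fin s) ℂ))
    (hmargT : ptraceS ψ = ((t : ℂ)⁻¹) • (1 : Matrix (Fin t) (Fin t) ℂ))
    (ρ : ℝ) (hρ0 : 0 ≤ ρ) (hρ1 : ρ < 1)
    (S : Fin (s ^ 2) → Matrix (Fin s) (Fin s) ℂ)
    (T : Fin (t ^ 2) → Matrix (Fin t) (Fin t) ℂ)
    (hSH : ∀ i, (S i).IsHermitian) (hTH : ∀ j, (T j).IsHermitian)
    (hS0 : S 0 = 1) (hT0 : T 0 = 1)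
    (hSortho : ∀ i i', (1 / (s : ℂ)) * Matrix.trace (S i * S i') = if i = i' then 1 else 0)
    (hTortho : ∀ j j', (1 / (t : ℂ)) * Matrix.trace (T j * T j') = if j = j' then 1 else 0)
    (c : ℕ → ℝ) (hc0 : c 0 = 1) (hcnn : ∀ i, 0 ≤ c i) (hcρ : ∀ i, i ≠ 0 → c i ≤ ρ)
    (hcorr : ∀ (i : Fin (s ^ 2)) (j : Fin (t ^ 2)),
      Matrix.trace (tensorOp (S i) (T j) * ψ) =
        if (i : ℕ) = (j : ℕ) then ((c (i : ℕ) : ℝ) : ℂ) else 0)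
    (Mhat : (Fin n → Fin (s ^ 2)) → ℝ) (Nhat : (Fin n → Fin (t ^ 2)) → ℝ)
    (M : Matrix (Fin n → Fin s) (Fin n → Fin s) ℂ)
    (N : Matrix (Fin n → Fin t) (Fin n → Fin t) ℂ)
    (hM : M = ∑ σ : Fin n → Fin (s ^ 2), Mhat σ • basisProd S σ)
    (hN : N = ∑ τ : Fin n → Fin (t ^ 2), Nhat τ • basisProd T τ)
    (d : ℕ) :
    ‖(Matrix.trace (tensorOp M N * tensorPow ψ) -
        Matrix.trace (tensorOp (lowDegreePart S Mhat d) (lowDegreePart T Nhat d) *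
          tensorPow ψ))‖ ≤
      ρ ^ d * Real.sqrt (nnormSq M) * Real.sqrt (nnormSq N) := by
  classical
  have hsC : ((s : ℂ)) ≠ 0 := Nat.cast_ne_zero.2 (NeZero.ne s)
  have htC : ((t : ℂ)) ≠ 0 := Nat.cast_ne_zero.2 (NeZero.ne t)
  have hSO : ∀ i i', Matrix.trace (S i * S i') = if i = i' then (s : ℂ) else 0 := by
    intro i i'
    have h := hSortho i i'
    rw [one_div, inv_mul_eq_iff_eq_mul₀ hsC] at h
    rw [h]; split <;> simp
  have hTO : ∀ j j', Matrix.trace (T j * T j') = if j = j' then (t : ℂ) else 0 := by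
    intro j j'
    have h := hTortho j j'
    rw [one_div, inv_mul_eq_iff_eq_mul₀ htC] at h
    rw [h]; split <;> simp
  set F : (Fin n → Fin (s ^ 2)) → (Fin n → Fin (t ^ 2)) → ℝ :=
    fun σ τ => if ∀ i, (σ i : ℕ) = (τ i : ℕ) then ∏ i, c (σ i : ℕ) else 0 with hF
  have hkey : ∀ σ τ,
      Matrix.trace (tensorOp (basisProd S σ) (basisProd T τ) * tensorPow ψ)
        = ((F σ τ : ℝ) : ℂ) := by
    intro σ τ
    rw [basisProd_eq_kron, basisProd_eq_kron, tensor_trace_factor]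
    simp_rw [hcorr]
    rw [Finset.prod_ite_zero]
    by_cases h : ∀ i, ((σ i : ℕ) = (τ i : ℕ)) <;> simp [hF, h]
  set m' : (Fin n → Fin (s ^ 2)) → ℝ := fun σ => if suppCard σ ≤ d then Mhat σ else 0 with hm'
  set n' : (Fin n → Fin (t ^ 2)) → ℝ := fun τ => if suppCard τ ≤ d then Nhat τ else 0 with hn'
  have hMlow : lowDegreePart S Mhat d = ∑ σ : Fin n → Fin (s ^ 2), m' σ • basisProd S σ := by
    rw [lowDegreePart, Finset.sum_filter]
    exact Finset.sum_congr rfl fun σ _ => by by_cases h : suppCard σ ≤ d <;> simp [hm', h]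
  have hNlow : lowDegreePart T Nhat d = ∑ τ : Fin n → Fin (t ^ 2), n' τ • basisProd T τ := by
    rw [lowDegreePart, Finset.sum_filter]
    exact Finset.sum_congr rfl fun τ _ => by by_cases h : suppCard τ ≤ d <;> simp [hn', h]
  have e1 : Matrix.trace (tensorOp M N * tensorPow ψ)
      = ((∑ σ, ∑ τ, Mhat σ * Nhat τ * F σ τ : ℝ) : ℂ) := by
    rw [hM, hN, trace_tensor_expand]
    push_cast
    refine Finset.sum_congr rfl fun σ _ => Finset.sum_congr rfl fun τ _ => ?_
    rw [hkey]
  have e2 : Matrix.trace (tensorOp (lowDegreePart S Mhat d) (lowDegreePart T Nhat d) *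
        tensorPow ψ)
      = ((∑ σ, ∑ τ, m' σ * n' τ * F σ τ : ℝ) : ℂ) := by
    rw [hMlow, hNlow, trace_tensor_expand]
    push_cast
    refine Finset.sum_congr rfl fun σ _ => Finset.sum_congr rfl fun τ _ => ?_
    rw [hkey]
  rw [e1, e2, ← Complex.ofReal_sub, Complex.norm_real, Real.norm_eq_abs]
  have hdiff : (∑ σ, ∑ τ, Mhat σ * Nhat τ * F σ τ) - (∑ σ, ∑ τ, m' σ * n' τ * F σ τ)
      = ∑ p : (Fin n → Fin (s ^ 2)) × (Fin n → Fin (t ^ 2)),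
          (Mhat p.1 * Nhat p.2 - m' p.1 * n' p.2) * F p.1 p.2 := by
    rw [Fintype.sum_prod_type, ← Finset.sum_sub_distrib]
    refine Finset.sum_congr rfl fun σ _ => ?_
    rw [← Finset.sum_sub_distrib]
    exact Finset.sum_congr rfl fun τ _ => by ring
  rw [hdiff]
  have hnm : nnormSq M = ∑ σ, (Mhat σ) ^ 2 := by
    rw [hM]
    exact nnormSq_eq_sum_sq (Nat.pos_of_ne_zero (NeZero.ne s)) S hSH hSO Mhat
  have hnN : nnormSq N = ∑ τ, (Nhat τ) ^ 2 := by
    rw [hN]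
    exact nnormSq_eq_sum_sq (Nat.pos_of_ne_zero (NeZero.ne t)) T hTH hTO Nhat
  set al : ((Fin n → Fin (s ^ 2)) × (Fin n → Fin (t ^ 2))) → Prop :=
    fun p => ∀ i, (p.1 i : ℕ) = (p.2 i : ℕ) with hal
  set E := Finset.univ.filter al with hE
  have halign_supp : ∀ (σ : Fin n → Fin (s ^ 2)) (τ : Fin n → Fin (t ^ 2)),
      (∀ i, (σ i : ℕ) = (τ i : ℕ)) → suppCard σ = suppCard τ := by
    intro σ τ h
    have heq : (Finset.univ.filter fun i => σ i ≠ 0)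
        = (Finset.univ.filter fun i => τ i ≠ 0) := by
      apply Finset.filter_congr
      intro i _
      have h0 : σ i = 0 ↔ τ i = 0 := by
        rw [← fin_val_eq_zero_iff, ← fin_val_eq_zero_iff, h i]
      exact not_congr h0
    rw [suppCard, suppCard, heq]
  have hFnn : ∀ σ τ, 0 ≤ F σ τ := by
    intro σ τ
    rw [hF]
    dsimp only
    split
    · exact Finset.prod_nonneg fun i _ => hcnn _
    · exact le_refl 0
  have hFbound : ∀ σ τ, (∀ i, (σ i : ℕ) = (τ i : ℕ)) → d < suppCard σ → F σ τ ≤ ρ ^ d := by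
    intro σ τ h hd2
    have hFv : F σ τ = ∏ i, c (σ i : ℕ) := by rw [hF]; exact if_pos h
    rw [hFv]
    calc ∏ i, c (σ i : ℕ) ≤ ∏ i, (if σ i ≠ 0 then ρ else 1) := by
          refine Finset.prod_le_prod (fun i _ => hcnn _) (fun i _ => ?_)
          by_cases h0 : σ i = 0
          · simp [h0, hc0]
          · rw [if_pos h0]
            exact hcρ _ fun hv => h0 ((fin_val_eq_zero_iff _).1 hv)
      _ = ρ ^ suppCard σ := by
          rw [Finset.prod_ite]
          simp [suppCard, Finset.prod_const]
      _ ≤ ρ ^ d := pow_le_pow_of_le_one hρ0 hρ1.le hd2.le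
  have hpt : ∀ p : (Fin n → Fin (s ^ 2)) × (Fin n → Fin (t ^ 2)),
      |(Mhat p.1 * Nhat p.2 - m' p.1 * n' p.2) * F p.1 p.2|
        ≤ (if al p then ρ ^ d * (|Mhat p.1| * |Nhat p.2|) else 0) := by
    intro p
    by_cases hA : al p
    · rw [if_pos hA]
      by_cases hd2 : suppCard p.1 ≤ d
      · have hd3 : suppCard p.2 ≤ d := halign_supp _ _ hA ▸ hd2
        have h1 : m' p.1 = Mhat p.1 := if_pos hd2
        have h2 : n' p.2 = Nhat p.2 := if_pos hd3
        rw [h1, h2, sub_self, zero_mul, abs_zero]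
        positivity
      · have h1 : m' p.1 = 0 := if_neg hd2
        rw [h1, zero_mul, sub_zero, abs_mul, abs_mul]
        have hFb : |F p.1 p.2| ≤ ρ ^ d := by
          rw [abs_of_nonneg (hFnn _ _)]
          exact hFbound _ _ hA (not_le.1 hd2)
        calc |Mhat p.1| * |Nhat p.2| * |F p.1 p.2|
            ≤ |Mhat p.1| * |Nhat p.2| * ρ ^ d :=
              mul_le_mul_of_nonneg_left hFb (by positivity)
          _ = ρ ^ d * (|Mhat p.1| * |Nhat p.2|) := by ring
    · have hF0 : F p.1 p.2 = 0 := by rw [hF]; exact if_neg hA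
      rw [if_neg hA, hF0, mul_zero, abs_zero]
  have hinj1 : ∀ p ∈ E, ∀ q ∈ E, p.1 = q.1 → p = q := by
    intro p hp q hq h1
    have hp' : al p := (Finset.mem_filter.1 hp).2
    have hq' : al q := (Finset.mem_filter.1 hq).2
    refine Prod.ext h1 (funext fun i => ?_)
    exact Fin.val_injective (by rw [← hp' i, ← hq' i, h1])
  have hinj2 : ∀ p ∈ E, ∀ q ∈ E, p.2 = q.2 → p = q := by
    intro p hp q hq h2
    have hp' : al p := (Finset.mem_filter.1 hp).2
    have hq' : al q := (Finset.mem_filter.1 hq).2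
    refine Prod.ext (funext fun i => ?_) h2
    exact Fin.val_injective (by rw [hp' i, hq' i, h2])
  have hs1 : ∑ p ∈ E, (Mhat p.1) ^ 2 ≤ ∑ σ, (Mhat σ) ^ 2 := by
    calc ∑ p ∈ E, (Mhat p.1) ^ 2 = ∑ σ ∈ E.image Prod.fst, (Mhat σ) ^ 2 := by
          rw [Finset.sum_image hinj1]
      _ ≤ ∑ σ, (Mhat σ) ^ 2 :=
          Finset.sum_le_sum_of_subset_of_nonneg (Finset.subset_univ _)
            (fun σ _ _ => sq_nonneg _)
  have hs2 : ∑ p ∈ E, (Nhat p.2) ^ 2 ≤ ∑ τ, (Nhat τ) ^ 2 := by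
    calc ∑ p ∈ E, (Nhat p.2) ^ 2 = ∑ τ ∈ E.image Prod.snd, (Nhat τ) ^ 2 := by
          rw [Finset.sum_image hinj2]
      _ ≤ ∑ τ, (Nhat τ) ^ 2 :=
          Finset.sum_le_sum_of_subset_of_nonneg (Finset.subset_univ _)
            (fun τ _ _ => sq_nonneg _)
  calc |∑ p : (Fin n → Fin (s ^ 2)) × (Fin n → Fin (t ^ 2)),
        (Mhat p.1 * Nhat p.2 - m' p.1 * n' p.2) * F p.1 p.2|
      ≤ ∑ p : (Fin n → Fin (s ^ 2)) × (Fin n → Fin (t ^ 2)),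
          |(Mhat p.1 * Nhat p.2 - m' p.1 * n' p.2) * F p.1 p.2| :=
        Finset.abs_sum_le_sum_abs _ _
    _ ≤ ∑ p : (Fin n → Fin (s ^ 2)) × (Fin n → Fin (t ^ 2)),
          (if al p then ρ ^ d * (|Mhat p.1| * |Nhat p.2|) else 0) :=
        Finset.sum_le_sum fun p _ => hpt p
    _ = ∑ p ∈ E, ρ ^ d * (|Mhat p.1| * |Nhat p.2|) := by rw [hE, Finset.sum_filter]
    _ = ρ ^ d * ∑ p ∈ E, |Mhat p.1| * |Nhat p.2| := by rw [Finset.mul_sum]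
    _ ≤ ρ ^ d * (Real.sqrt (∑ p ∈ E, |Mhat p.1| ^ 2) *
          Real.sqrt (∑ p ∈ E, |Nhat p.2| ^ 2)) :=
        mul_le_mul_of_nonneg_left (Real.sum_mul_le_sqrt_mul_sqrt E _ _) (by positivity)
    _ ≤ ρ ^ d * (Real.sqrt (∑ σ, (Mhat σ) ^ 2) * Real.sqrt (∑ τ, (Nhat τ) ^ 2)) := by
        refine mul_le_mul_of_nonneg_left ?_ (by positivity)
        refine mul_le_mul (Real.sqrt_le_sqrt ?_) (Real.sqrt_le_sqrt ?_)
          (Real.sqrt_nonneg _) (Real.sqrt_nonneg _)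
        · simpa [sq_abs] using hs1
        · simpa [sq_abs] using hs2
    _ = ρ ^ d * Real.sqrt (nnormSq M) * Real.sqrt (nnormSq N) := by
        rw [hnm, hnN]; ring
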